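/- Let G be a non-compact, locally compact Hausdorff topological group acting continuously on a Hausdorff topological space Σ, and let σ ∈ Σ. Then the following are equivalent: (a) O(σ) ∩ L(σ) ≠ ∅; (b) L(σ) = closure(O(σ)); (c) σ ∈ L(σ); (d) for every open neighborhood U of σ the set Rec({σ},U) = {g ∈ G | g•σ ∈ U} is not relatively compact in G. -/

import Mathlib

open Set MulAction Pointwise

/-- The recurrence set `Rec(M,N) = {g ∈ G ∣ (g•M) ∩ N ≠ ∅}`. -/
def RecSet (G : Type*) {A : Type*} [SMul G A] (M N : Set A) : Set G :=
  {g : G | ((g • M) ∩ N).Nonempty}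

/-- A subset `S` of a topological group is syndetic if `K·S = G` for some compact `K`. -/
def Syndetic {G : Type*} [Mul G] [TopologicalSpace G] (S : Set G) : Prop :=
  ∃ K : Set G, IsCompact K ∧ K * S = Set.univ

/-- The limit set `L(σ) = ⋂_{K ⊆ G compact} closure {g•σ ∣ g ∈ G \ K}`. -/
def LimitSet (G : Type*) {A : Type*} [TopologicalSpace G] [TopologicalSpace A] [SMul G A]
    (σ : A) : Set A :=
  ⋂ (K : Set G) (_ : IsCompact K), closure ((fun g : G => g • σ) '' Kᶜ)

/-- The set of fixed points of the action. -/
def FixPts (G A : Type*) [SMul G A] : Set A := {σ | ∀ g : G, g • σ = σ}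

/-- The set of periodic points: those whose stabilizer is syndetic. -/
def PerPts (G A : Type*) [Mul G] [TopologicalSpace G] [SMul G A] : Set A :=
  {σ | Syndetic {g : G | g • σ = σ}}

/-- The set of weakly periodic points: those whose stabilizer is not compact. -/
def WPerPts (G A : Type*) [TopologicalSpace G] [SMul G A] : Set A :=
  {σ | ¬ IsCompact {g : G | g • σ = σ}}

/-- The set of almost periodic points: `Rec({σ},U)` is syndetic for every neighborhood
`U` of `σ`. -/
def APerPts (G A : Type*) [Mul G] [TopologicalSpace G] [TopologicalSpace A] [SMul G A] :
    Set A :=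
  {σ | ∀ U ∈ nhds σ, Syndetic {g : G | g • σ ∈ U}}

/-- The set of recurrent points: `σ ∈ L(σ)`. -/
def RecPts (G A : Type*) [TopologicalSpace G] [TopologicalSpace A] [SMul G A] : Set A :=
  {σ | σ ∈ LimitSet G σ}

/-- The set of non-wandering points: `Rec(W,W)` is not relatively compact for any
neighborhood `W` of `σ`. -/
def NWPts (G A : Type*) [TopologicalSpace G] [TopologicalSpace A] [SMul G A] : Set A :=
  {σ | ∀ W ∈ nhds σ, ¬ IsCompact (closure (RecSet G W W))}

/-- For a continuous action of a non-compact, locally compact Hausdorff topological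
group, the following are equivalent: (a) `O(σ) ∩ L(σ) ≠ ∅`; (b) `L(σ) = closure(O(σ))`;
(c) `σ ∈ L(σ)`; (d) `Rec({σ},U)` is not relatively compact for any open neighborhood
`U` of `σ`. -/
lemma mem_limitSet_iff {G A : Type*} [Group G] [TopologicalSpace G]
    [TopologicalSpace A] [MulAction G A] {σ x : A} :
    x ∈ LimitSet G σ ↔ ∀ K : Set G, IsCompact K → x ∈ closure ((fun g : G => g • σ) '' Kᶜ) := by
  simp [LimitSet, mem_iInter]

lemma smul_mem_limitSet {G A : Type*} [Group G] [TopologicalSpace G] [IsTopologicalGroup G]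
    [TopologicalSpace A] [MulAction G A] [ContinuousSMul G A] {σ x : A} (g : G)
    (hx : x ∈ LimitSet G σ) : g • x ∈ LimitSet G σ := by
  rw [mem_limitSet_iff] at hx ⊢
  intro K hK
  have hK' : IsCompact ((g⁻¹ : G) • K) := hK.smul g⁻¹
  have h1 := hx _ hK'
  have hcont : Continuous (fun y : A => g • y) := continuous_const_smul g
  have h2 : g • x ∈ closure ((fun y : A => g • y) '' ((fun h : G => h • σ) '' ((g⁻¹ • K : Set G)ᶜ))) :=
    image_closure_subset_closure_image hcont ⟨x, h1, rfl⟩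
  refine closure_mono ?_ h2
  rintro _ ⟨_, ⟨h, hh, rfl⟩, rfl⟩
  refine ⟨g * h, ?_, (smul_smul g h σ).symm⟩
  intro hgh
  exact hh (by rwa [Set.mem_smul_set_iff_inv_smul_mem, inv_inv, smul_eq_mul])

theorem stmt11 {G A : Type*} [Group G] [TopologicalSpace G] [IsTopologicalGroup G] [T2Space G]
    [LocallyCompactSpace G]
    [TopologicalSpace A] [T2Space A] [MulAction G A] [ContinuousSMul G A]
    (hG : ¬ CompactSpace G) (σ : A) :
    List.TFAE
      [(MulAction.orbit G σ ∩ LimitSet G σ).Nonempty,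
        LimitSet G σ = closure (MulAction.orbit G σ),
        σ ∈ LimitSet G σ,
        ∀ U : Set A, IsOpen U → σ ∈ U → ¬ IsCompact (closure {g : G | g • σ ∈ U})] := by
  tfae_have 1 → 3 := by
    rintro ⟨x, hxo, hxL⟩
    obtain ⟨g, rfl⟩ : ∃ g : G, g • σ = x := hxo
    have := smul_mem_limitSet (g⁻¹) hxL
    rwa [inv_smul_smul] at this
  tfae_have 3 → 2 := by
    intro h3
    apply le_antisymm
    · intro x hx
      have := mem_limitSet_iff.mp hx ∅ isCompact_empty
      refine closure_mono ?_ (by simpa using this)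
      rintro _ ⟨g, -, rfl⟩
      exact ⟨g, rfl⟩
    · refine closure_minimal ?_ ?_
      · rintro _ ⟨g, rfl⟩
        exact smul_mem_limitSet g h3
      · exact isClosed_iInter fun _ => isClosed_iInter fun _ => isClosed_closure
  tfae_have 2 → 1 := by
    intro h2
    exact ⟨σ, mem_orbit_self σ, h2 ▸ subset_closure (mem_orbit_self σ)⟩
  tfae_have 3 → 4 := by
    intro h3 U hU hσU hcomp
    have hmem := mem_limitSet_iff.mp h3 _ hcomp
    have hsub : (fun g : G => g • σ) '' (closure {g : G | g • σ ∈ U})ᶜ ⊆ Uᶜ := by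
      rintro _ ⟨g, hg, rfl⟩
      exact fun hgU => hg (subset_closure hgU)
    exact (closure_minimal hsub hU.isClosed_compl hmem) hσU
  tfae_have 4 → 3 := by
    intro h4
    rw [mem_limitSet_iff]
    intro K hK
    rw [mem_closure_iff]
    intro U hU hσU
    have hnc := h4 U hU hσU
    by_contra hempty
    apply hnc
    have hsub : {g : G | g • σ ∈ U} ⊆ K := by
      intro g hg
      by_contra hgK
      exact hempty ⟨g • σ, hg, ⟨g, hgK, rfl⟩⟩
    exact hK.of_isClosed_subset isClosed_closure (closure_minimal hsub hK.isClosed)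
  tfae_finish
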